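/- The matrices σx, σy, σz satisfy the defining relations of the triangle group Δ{p,q}: σx² = 1, σy² = 1, σz² = 1, (σx·σy)^p = 1, (σy·σz)^q = 1, and (σz·σx)² = 1 (where 1 denotes the 3×3 identity matrix). -/

import Mathlib

open Real

noncomputable def sigmaX (η : ℝ) : Matrix (Fin 3) (Fin 3) ℝ :=
  !![-1, 2*η, 0; 0, 1, 0; 0, 0, 1]

noncomputable def sigmaY (η ζ : ℝ) : Matrix (Fin 3) (Fin 3) ℝ :=
  !![1, 0, 0; 2*η, -1, 2*ζ; 0, 0, 1]

noncomputable def sigmaZ (ζ : ℝ) : Matrix (Fin 3) (Fin 3) ℝ :=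
  !![1, 0, 0; 0, 1, 0; 0, 2*ζ, -1]

/-- Closed form for powers of `sigmaX * sigmaY`. -/
noncomputable def NpowXY (c z u w : ℝ) : Matrix (Fin 3) (Fin 3) ℝ :=
  !![u*c + (1-(1-c^2)*w), -u, z*(c*w+u);
     u, (1-(1-c^2)*w) - u*c, z*w;
     0, 0, 1]

/-- Closed form for powers of `sigmaY * sigmaZ`. -/
noncomputable def NpowYZ (d e u w : ℝ) : Matrix (Fin 3) (Fin 3) ℝ :=
  !![1, 0, 0;
     e*w, u*d + (1-(1-d^2)*w), -u;
     e*(d*w - u), u, (1-(1-d^2)*w) - u*d]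

lemma stepXY (c z u w : ℝ) :
    (sigmaX c * sigmaY c z) * NpowXY c z u w
      = NpowXY c z (u*(2*c^2-1) + 2*c - 2*c*(1-c^2)*w) (2 + (2*c^2-1)*w + 2*c*u) := by
  ext i j
  fin_cases i <;> fin_cases j <;>
    simp [sigmaX, sigmaY, NpowXY, Matrix.mul_apply, Fin.sum_univ_three] <;> ring

lemma stepYZ (d e u w : ℝ) :
    (sigmaY e d * sigmaZ d) * NpowYZ d e u w
      = NpowYZ d e (u*(2*d^2-1) + 2*d - 2*d*(1-d^2)*w) (2 + (2*d^2-1)*w + 2*d*u) := by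
  ext i j
  fin_cases i <;> fin_cases j <;>
    simp [sigmaY, sigmaZ, NpowYZ, Matrix.mul_apply, Fin.sum_univ_three] <;> ring

lemma id_u (θ : ℝ) (hs : Real.sin θ ≠ 0) (n : ℕ) :
    Real.sin (2*(n+1)*θ) / Real.sin θ
      = (Real.sin (2*n*θ)/Real.sin θ)*(2*Real.cos θ^2-1) + 2*Real.cos θ
        - 2*Real.cos θ*(1-Real.cos θ^2)*((1 - Real.cos (2*n*θ))/Real.sin θ^2) := by
  have h : Real.sin θ ^ 2 = 1 - Real.cos θ ^ 2 := by
    have := Real.sin_sq_add_cos_sq θ; linarith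
  have e1 : 2*((n:ℝ)+1)*θ = 2*n*θ + 2*θ := by ring
  rw [e1, Real.sin_add, Real.sin_two_mul, Real.cos_two_mul]
  field_simp
  linear_combination (2*Real.cos θ*(Real.cos (2*n*θ) - 1)) * h

lemma id_w (θ : ℝ) (hs : Real.sin θ ≠ 0) (n : ℕ) :
    (1 - Real.cos (2*(n+1)*θ)) / Real.sin θ^2
      = 2 + (2*Real.cos θ^2-1)*((1 - Real.cos (2*n*θ))/Real.sin θ^2)
        + 2*Real.cos θ*(Real.sin (2*n*θ)/Real.sin θ) := by
  have h : Real.sin θ ^ 2 = 1 - Real.cos θ ^ 2 := by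
    have := Real.sin_sq_add_cos_sq θ; linarith
  have e1 : 2*((n:ℝ)+1)*θ = 2*n*θ + 2*θ := by ring
  rw [e1, Real.cos_add, Real.sin_two_mul, Real.cos_two_mul]
  field_simp
  linear_combination (-2) * h

lemma powXY (θ z : ℝ) (hs : Real.sin θ ≠ 0) (n : ℕ) :
    (sigmaX (Real.cos θ) * sigmaY (Real.cos θ) z) ^ n
      = NpowXY (Real.cos θ) z (Real.sin (2*n*θ)/Real.sin θ)
          ((1 - Real.cos (2*n*θ))/Real.sin θ^2) := by
  induction n with
  | zero =>
      norm_num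
      ext i j
      fin_cases i <;> fin_cases j <;> simp [NpowXY, Matrix.one_apply, Matrix.vecHead, Matrix.vecTail]
  | succ n ih =>
      rw [pow_succ', ih, stepXY, ← id_u θ hs n, ← id_w θ hs n]
      push_cast
      ring_nf

lemma powYZ (θ e : ℝ) (hs : Real.sin θ ≠ 0) (n : ℕ) :
    (sigmaY e (Real.cos θ) * sigmaZ (Real.cos θ)) ^ n
      = NpowYZ (Real.cos θ) e (Real.sin (2*n*θ)/Real.sin θ)
          ((1 - Real.cos (2*n*θ))/Real.sin θ^2) := by
  induction n with
  | zero =>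
      norm_num
      ext i j
      fin_cases i <;> fin_cases j <;> simp [NpowYZ, Matrix.one_apply, Matrix.vecHead, Matrix.vecTail]
  | succ n ih =>
      rw [pow_succ', ih, stepYZ, ← id_u θ hs n, ← id_w θ hs n]
      push_cast
      ring_nf

lemma sin_pi_div_ne (p : ℕ) (hp : 2 ≤ p) : Real.sin (π / p) ≠ 0 := by
  have hp0 : (0:ℝ) < p := by positivity
  have h1 : 0 < π / p := by positivity
  have h2 : π / p < π := by
    rw [div_lt_iff₀ hp0]
    have h2p : (2:ℝ) ≤ p := by exact_mod_cast hp
    nlinarith [Real.pi_pos, mul_le_mul_of_nonneg_left h2p Real.pi_pos.le]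
  exact ne_of_gt (Real.sin_pos_of_pos_of_lt_pi h1 h2)

lemma two_n_theta (p : ℕ) (hp : 2 ≤ p) : 2*(p:ℝ)*(π/p) = 2*π := by
  have hp0 : (p:ℝ) ≠ 0 := by positivity
  field_simp

theorem triangle_group_relations (p q : ℕ) (hp : 2 ≤ p) (hq : 2 ≤ q)
    (η ζ : ℝ) (hη : η = Real.cos (π / p)) (hζ : ζ = Real.cos (π / q)) :
    sigmaX η ^ 2 = 1 ∧ sigmaY η ζ ^ 2 = 1 ∧ sigmaZ ζ ^ 2 = 1 ∧
    (sigmaX η * sigmaY η ζ) ^ p = 1 ∧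
    (sigmaY η ζ * sigmaZ ζ) ^ q = 1 ∧
    (sigmaZ ζ * sigmaX η) ^ 2 = 1 := by
  refine ⟨?_, ?_, ?_, ?_, ?_, ?_⟩
  · rw [sq]; ext i j
    fin_cases i <;> fin_cases j <;>
      simp [sigmaX, Matrix.mul_apply, Fin.sum_univ_three, Matrix.one_apply, Matrix.vecHead, Matrix.vecTail] <;> ring
  · rw [sq]; ext i j
    fin_cases i <;> fin_cases j <;>
      simp [sigmaY, Matrix.mul_apply, Fin.sum_univ_three, Matrix.one_apply, Matrix.vecHead, Matrix.vecTail] <;> ring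
  · rw [sq]; ext i j
    fin_cases i <;> fin_cases j <;>
      simp [sigmaZ, Matrix.mul_apply, Fin.sum_univ_three, Matrix.one_apply, Matrix.vecHead, Matrix.vecTail] <;> ring
  · subst hη hζ
    rw [powXY (π/p) _ (sin_pi_div_ne p hp) p, two_n_theta p hp]
    simp [Real.sin_two_pi, Real.cos_two_pi]
    ext i j
    fin_cases i <;> fin_cases j <;> simp [NpowXY, Matrix.one_apply, Matrix.vecHead, Matrix.vecTail]
  · subst hη hζ
    rw [powYZ (π/q) _ (sin_pi_div_ne q hq) q, two_n_theta q hq]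
    simp [Real.sin_two_pi, Real.cos_two_pi]
    ext i j
    fin_cases i <;> fin_cases j <;> simp [NpowYZ, Matrix.one_apply, Matrix.vecHead, Matrix.vecTail]
  · rw [sq]; ext i j
    fin_cases i <;> fin_cases j <;>
      simp [sigmaZ, sigmaX, Matrix.mul_apply, Fin.sum_univ_three, Matrix.one_apply, Matrix.vecHead, Matrix.vecTail] <;> ring
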